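/- Let a_1,...,a_n and b_1,...,b_n be non-negative real numbers and s a positive integer. Then Σ_{i,j} |b_j^s − a_i^s| ≥ (Σ_j b_j^{s−1}) · (Σ_j b_j − Σ_i a_i). -/
import Mathlib


theorem stmt_1 (n : ℕ) (a b : Fin n → ℝ) (ha : ∀ i, 0 ≤ a i) (hb : ∀ j, 0 ≤ b j)
    (s : ℕ) (hs : 1 ≤ s) :
    ∑ i, ∑ j, |b j ^ s - a i ^ s| ≥
      (∑ j, b j ^ (s - 1)) * (∑ j, b j - ∑ i, a i) := by
  obtain ⟨t, rfl⟩ : ∃ t, s = t + 1 := ⟨s - 1, (Nat.succ_pred_eq_of_pos hs).symm⟩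
  simp only [Nat.add_sub_cancel]
  have key : ∀ i j, b j ^ t * (b j - a i) ≤ |b j ^ (t + 1) - a i ^ (t + 1)| := by
    intro i j
    rcases le_total (a i) (b j) with h | h
    · rw [abs_of_nonneg (sub_nonneg.2 (pow_le_pow_left₀ (ha i) h _))]
      have h1 : a i ^ t ≤ b j ^ t := pow_le_pow_left₀ (ha i) h t
      rw [pow_succ, pow_succ]
      nlinarith [ha i, hb j]
    · have h2 : b j - a i ≤ 0 := by linarith
      exact (mul_nonpos_of_nonneg_of_nonpos (pow_nonneg (hb j) t) h2).trans
        (abs_nonneg _)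
  have step1 : ∑ i, ∑ j, b j ^ t * (b j - a i) ≤ ∑ i, ∑ j, |b j ^ (t + 1) - a i ^ (t + 1)| :=
    Finset.sum_le_sum fun i _ => Finset.sum_le_sum fun j _ => key i j
  have chev : (∑ j, b j ^ t) * (∑ j, b j) ≤ (n : ℝ) * ∑ j, b j ^ t * b j := by
    have hm : Monovary (fun j => b j ^ t) b := fun i j h => pow_le_pow_left₀ (hb i) h.le t
    simpa using hm.sum_mul_sum_le_card_mul_sum
  have expand : ∑ i, ∑ j, b j ^ t * (b j - a i)
      = (n : ℝ) * ∑ j, b j ^ t * b j - (∑ j, b j ^ t) * (∑ i, a i) := by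
    simp only [mul_sub, Finset.sum_sub_distrib, Finset.sum_const, Finset.card_univ,
      Fintype.card_fin, nsmul_eq_mul, ← Finset.sum_mul, ← Finset.mul_sum]
  have : (∑ j, b j ^ t) * (∑ j, b j - ∑ i, a i) ≤ ∑ i, ∑ j, b j ^ t * (b j - a i) := by
    rw [expand, mul_sub]
    linarith
  linarith
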